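/- In an (R,Z)-cluster pattern, if two seeds Σ_t and Σ_{t_0} have equal clusters X_t = X_{t_0} (as ordered tuples, x_{i;t} = x_{i;t_0} for all i), then their exchange matrices coincide: B_t = B_{t_0}. -/

import Mathlib

open Matrix

/-- The generalized matrix mutation `μ_k^g` in direction `k`, with parameters `r`. -/
def genMut {n : ℕ} (r : Fin n → ℤ) (k : Fin n)
    (B : Matrix (Fin n) (Fin n) ℤ) : Matrix (Fin n) (Fin n) ℤ :=
  Matrix.of fun i j =>
    if i = k ∨ j = k then -B i j
    else B i j + r k * (B i k * max (-B k j) 0 + max (B i k) 0 * B k j)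

/-- One step of `(R,Z)`-mutation in direction `k` between the seeds `(X, B)` and
`(X', B')`, the clusters being written as functions of the initial cluster. -/
def IsGCAMutation {n : ℕ} (r : Fin n → ℤ)
    (X X' : Fin n → (Fin n → ℝ) → ℝ) (B B' : Matrix (Fin n) (Fin n) ℤ) : Prop :=
  ∃ k : Fin n, B' = genMut r k B ∧ (∀ i, i ≠ k → X' i = X i) ∧
    ∃ (y c : ℝ) (z : ℕ → ℝ), 0 < y ∧ 0 < c ∧ (∀ m, 0 < z m) ∧
      z 0 = 1 ∧ z (r k).toNat = 1 ∧
      X' k = fun q =>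
        (X k q)⁻¹ * (∏ j, X j q ^ (max (-(B j k)) 0).toNat) ^ (r k).toNat *
          (∑ m ∈ Finset.range ((r k).toNat + 1),
            z m * (y * ∏ j, X j q ^ (B j k)) ^ m) / c

namespace GCAHelper

variable {n : ℕ}

noncomputable def Mmat (r : Fin n → ℤ) (k : Fin n) (B : Matrix (Fin n) (Fin n) ℤ)
    (u : ℝ) : Matrix (Fin n) (Fin n) ℝ :=
  Matrix.of fun i j =>
    if i = k then
      (if j = k then -1 else (r k : ℝ) * ((max (-(B j k)) 0 : ℤ) : ℝ) + u * (B j k : ℝ))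
    else (if i = j then 1 else 0)

noncomputable def Om (r s : Fin n → ℤ) (B : Matrix (Fin n) (Fin n) ℤ) :
    Matrix (Fin n) (Fin n) ℝ :=
  Matrix.of fun i j => (B i j : ℝ) / ((r j : ℝ) * (s j : ℝ))


lemma sum_mul_col (r : Fin n → ℤ) (k : Fin n) (B : Matrix (Fin n) (Fin n) ℤ) (u : ℝ)
    (f : Fin n → ℝ) (j : Fin n) :
    ∑ p, f p * Mmat r k B u p j
      = f k * Mmat r k B u k j + (if j = k then 0 else f j) := by
  classical
  rw [← Finset.sum_compl_add_sum {k} (f := fun p => f p * Mmat r k B u p j)]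
  rw [Finset.sum_singleton, add_comm]
  congr 1
  have : ∀ p ∈ ({k}ᶜ : Finset (Fin n)), f p * Mmat r k B u p j
      = if p = j then f p else 0 := by
    intro p hp
    have hpk : p ≠ k := by simpa using hp
    simp [Mmat, hpk, mul_ite]
  rw [Finset.sum_congr rfl this, Finset.sum_ite_eq' ({k}ᶜ) j f]
  by_cases hj : j = k <;> simp [hj]


lemma Mmat_sq (r : Fin n → ℤ) (k : Fin n) (B : Matrix (Fin n) (Fin n) ℤ) (u : ℝ) :
    Mmat r k B u * Mmat r k B u = 1 := by
  ext i j
  rw [Matrix.mul_apply, sum_mul_col]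
  by_cases hi : i = k <;> by_cases hj : j = k
  · rw [hi, hj]; simp [Mmat]
  · rw [hi]; simp [Mmat, hj, Matrix.one_apply, Ne.symm hj, hi ▸ hj]
  · rw [hj]; simp [Mmat, hi, Matrix.one_apply, hi]
  · simp [Mmat, hi, hj, Matrix.one_apply]

lemma omega_step (r s : Fin n → ℤ) (hr : ∀ i, (0:ℝ) < (r i : ℝ)) (hs : ∀ i, (0:ℝ) < (s i : ℝ))
    (B : Matrix (Fin n) (Fin n) ℤ) (k : Fin n) (u : ℝ)
    (hskew : ∀ i j, (s j : ℝ) * (r j : ℝ) * (B j i : ℝ) = -((s i : ℝ) * (r i : ℝ) * (B i j : ℝ))) :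
    Om r s (genMut r k B) = (Mmat r k B u)ᵀ * Om r s B * Mmat r k B u := by
  classical
  have hBkk : (B k k : ℝ) = 0 := by
    have h1 : (s k : ℝ) * (r k : ℝ) * (B k k : ℝ) = 0 := by linarith [hskew k k]
    rcases mul_eq_zero.mp h1 with h | h
    · exact absurd h (mul_ne_zero (hs k).ne' (hr k).ne')
    · exact h
  have hTO : ∀ i p, ((Mmat r k B u)ᵀ * Om r s B) i p
      = Om r s B k p * Mmat r k B u k i + (if i = k then 0 else Om r s B i p) := by
    intro i p
    rw [Matrix.mul_apply]
    simp only [Matrix.transpose_apply]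
    rw [Finset.sum_congr rfl (fun q _ => mul_comm (Mmat r k B u q i) (Om r s B q p)),
      sum_mul_col]
  ext i j
  rw [Matrix.mul_apply,
    sum_mul_col r k B u (fun p => ((Mmat r k B u)ᵀ * Om r s B) i p) j]
  simp only [hTO]
  by_cases hi : i = k <;> by_cases hj : j = k
  · rw [hi, hj]; simp [Om, Mmat, genMut, hBkk]
  · rw [hi]; simp [Om, Mmat, genMut, hBkk, hj]; ring
  · rw [hj]; simp only [Om, Mmat, genMut, Matrix.of_apply, if_pos rfl, if_neg hi, hi]
    simp [hi, hBkk]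
    ring
  · simp only [Om, Mmat, genMut, Matrix.of_apply, if_neg hi, if_neg hj, if_pos rfl,
      if_neg (fun h : i = k ∨ j = k => by rcases h with h | h <;> [exact hi h; exact hj h])]
    have hmaxself : ∀ x : ℝ, max (-x) 0 = max x 0 - x := by
      intro x
      have := max_zero_sub_max_neg_zero_eq_self x
      linarith
    have hne : (s j : ℝ) * (r j : ℝ) ≠ 0 := mul_ne_zero (hs j).ne' (hr j).ne'
    have hDval : (B j k : ℝ) = -((s k:ℝ)*(r k:ℝ)*(B k j:ℝ))/((s j:ℝ)*(r j:ℝ)) := by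
      rw [eq_div_iff hne]
      linear_combination hskew k j
    have h1 : max (-(B j k:ℝ)) 0
        = ((s k:ℝ)*(r k:ℝ)/((s j:ℝ)*(r j:ℝ))) * (max (-(B k j:ℝ)) 0 + (B k j:ℝ)) := by
      have ht : (0:ℝ) ≤ (s k:ℝ)*(r k:ℝ)/((s j:ℝ)*(r j:ℝ)) :=
        (div_pos (mul_pos (hs k) (hr k)) (mul_pos (hs j) (hr j))).le
      have hC : max ((B k j:ℝ)) 0 = max (-(B k j:ℝ)) 0 + (B k j:ℝ) := by
        have := max_zero_sub_max_neg_zero_eq_self ((B k j:ℝ))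
        linarith
      rw [← hC]
      have hneg : -(B j k : ℝ) = ((s k:ℝ)*(r k:ℝ)/((s j:ℝ)*(r j:ℝ))) * (B k j:ℝ) := by
        rw [hDval]; field_simp
      rw [hneg]
      rw [mul_max_of_nonneg _ _ ht, mul_zero]
    have h2 : max (-(B i k:ℝ)) 0 = max ((B i k:ℝ)) 0 - (B i k:ℝ) := hmaxself _
    push_cast
    rw [h1, h2, hDval]
    simp only [hBkk]
    have hrk := (hr k).ne'
    have hsk := (hs k).ne'
    have hrj := (hr j).ne'
    have hsj := (hs j).ne'
    field_simp
    ring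

lemma pos_step (r : Fin n → ℤ) (X X' : Fin n → (Fin n → ℝ) → ℝ)
    (B B' : Matrix (Fin n) (Fin n) ℤ) (hm : IsGCAMutation r X X' B B')
    (q : Fin n → ℝ) (hX : ∀ i, 0 < X i q) : ∀ i, 0 < X' i q := by
  obtain ⟨k, -, hne, y, c, z, hy, hc, hz, -, -, hXk⟩ := hm
  intro i
  by_cases hik0 : i = k
  · subst hik0
    rw [hXk]
    have h1 : 0 < (X i q)⁻¹ := inv_pos.2 (hX i)
    have h2 : 0 < (∏ j, X j q ^ (max (-(B j i)) 0).toNat) ^ (r i).toNat :=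
      pow_pos (Finset.prod_pos fun j _ => pow_pos (hX j) _) _
    have h3 : 0 < ∑ m ∈ Finset.range ((r i).toNat + 1),
        z m * (y * ∏ j, X j q ^ (B j i)) ^ m :=
      Finset.sum_pos (fun m _ => mul_pos (hz m) (pow_pos (mul_pos hy
        (Finset.prod_pos fun j _ => zpow_pos (hX j) _)) m)) ⟨0, by simp⟩
    exact div_pos (mul_pos (mul_pos h1 h2) h3) hc
  · rw [hne i hik0]; exact hX i

lemma deriv_step (r : Fin n → ℤ) (hr : ∀ i, 0 < r i)
    (X X' : Fin n → (Fin n → ℝ) → ℝ) (B B' : Matrix (Fin n) (Fin n) ℤ)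
    (hm : IsGCAMutation r X X' B B')
    (hpos : ∀ q : Fin n → ℝ, (∀ w, 0 < q w) → ∀ i, 0 < X i q)
    (hdiag : ∀ i, B i i = 0) :
    ∃ (k : Fin n) (u : ℝ), B' = genMut r k B ∧
      ∀ (a h : Fin n → ℝ),
        (∀ i, HasDerivAt (fun v => Real.log (X i fun w => Real.exp (v * a w))) (h i) 0) →
        ∀ i, HasDerivAt (fun v => Real.log (X' i fun w => Real.exp (v * a w)))
          ((Mmat r k B u *ᵥ h) i) 0 := by
  classical
  obtain ⟨k, hgen, hne, y, c, z, hy, hc, hz, hz0, hzr, hXk⟩ := hm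
  set E : ℕ := (r k).toNat with hE
  have hEcast : ((E : ℕ) : ℝ) = ((r k : ℤ) : ℝ) := by
    rw [hE]
    exact_mod_cast congrArg (fun x : ℤ => (x : ℝ)) (Int.toNat_of_nonneg (hr k).le)
  have hmaxcast : ∀ j, (((max (-(B j k)) 0).toNat : ℕ) : ℝ) = ((max (-(B j k)) 0 : ℤ) : ℝ) := by
    intro j
    exact_mod_cast congrArg (fun x : ℤ => (x : ℝ)) (Int.toNat_of_nonneg (le_max_right _ _))
  set Q0 : ℝ := ∏ j, (X j fun _ => 1) ^ (B j k) with hQ0def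
  set S0 : ℝ := ∑ m ∈ Finset.range (E+1), z m * (y * Q0) ^ m with hS0def
  set u : ℝ := (∑ m ∈ Finset.range (E+1), z m * ((m:ℝ) * (y*Q0)^(m-1) * (y*Q0))) / S0 with hu
  refine ⟨k, u, hgen, ?_⟩
  intro a h hd i
  have hγ0 : (fun w : Fin n => Real.exp ((0:ℝ) * a w)) = fun _ : Fin n => (1:ℝ) := by
    funext w; simp
  have hf : ∀ (v : ℝ) j, 0 < X j (fun w => Real.exp (v * a w)) :=
    fun v => hpos _ (fun w => Real.exp_pos _)
  have hone : ∀ j, 0 < X j (fun _ : Fin n => (1:ℝ)) := hpos _ (fun w => one_pos)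
  by_cases hik : i = k
  swap
  · rw [hne i hik]
    have hrow : (Mmat r k B u *ᵥ h) i = h i := by
      simp only [Matrix.mulVec, dotProduct, Mmat, Matrix.of_apply, if_neg hik, ite_mul,
        one_mul, zero_mul]
      simp
    rw [hrow]
    exact hd i
  rw [hik]
  -- notation
  have hQ0pos : 0 < Q0 := Finset.prod_pos fun j _ => zpow_pos (hone j) _
  have hS0pos : 0 < S0 := Finset.sum_pos
    (fun m _ => mul_pos (hz m) (pow_pos (mul_pos hy hQ0pos) m)) ⟨0, by simp⟩
  -- piece 1
  have p1 : HasDerivAt (fun v => Real.log ((X k fun w => Real.exp (v * a w))⁻¹)) (-(h k)) 0 := by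
    have := (hd k).fun_neg
    simpa [Real.log_inv] using this
  -- piece 2
  have p2 : HasDerivAt
      (fun v => Real.log ((∏ j, (X j fun w => Real.exp (v * a w)) ^ (max (-(B j k)) 0).toNat) ^ E))
      ((E:ℝ) * ∑ j, (((max (-(B j k)) 0).toNat : ℕ) : ℝ) * h j) 0 := by
    have hrw : (fun v => Real.log ((∏ j, (X j fun w => Real.exp (v * a w)) ^ (max (-(B j k)) 0).toNat) ^ E))
        = fun v => (E:ℝ) * ∑ j, (((max (-(B j k)) 0).toNat : ℕ) : ℝ)
            * Real.log (X j fun w => Real.exp (v * a w)) := by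
      funext v
      rw [Real.log_pow, Real.log_prod (fun j _ => (pow_pos (hf v j) _).ne')]
      congr 1
      exact Finset.sum_congr rfl fun j _ => by rw [Real.log_pow]
    rw [hrw]
    exact (HasDerivAt.fun_sum fun j _ => (hd j).const_mul _).const_mul _
  -- the hat-y product
  have hQeq : ∀ v : ℝ, Real.exp (∑ j, (B j k : ℝ) * Real.log (X j fun w => Real.exp (v * a w)))
      = ∏ j, (X j fun w => Real.exp (v * a w)) ^ (B j k) := by
    intro v
    rw [Real.exp_sum]
    exact Finset.prod_congr rfl fun j _ => by
      rw [← Real.log_zpow, Real.exp_log (zpow_pos (hf v j) _)]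
  set w : ℝ := ∑ j, (B j k : ℝ) * h j with hw
  have hQL : HasDerivAt (fun v => ∑ j, (B j k : ℝ) * Real.log (X j fun w => Real.exp (v * a w)))
      w 0 := HasDerivAt.fun_sum fun j _ => (hd j).const_mul _
  have hQ0eval : (∏ j, (X j fun w => Real.exp ((0:ℝ) * a w)) ^ (B j k)) = Q0 := by
    rw [hγ0]
  have hQ : HasDerivAt (fun v => ∏ j, (X j fun w => Real.exp (v * a w)) ^ (B j k))
      (Q0 * w) 0 := by
    have h1 := hQL.exp
    rw [funext hQeq] at h1
    convert h1 using 1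
    rw [← hQ0eval, ← hQeq 0]
  -- piece 3
  have hSS : HasDerivAt (fun v => ∑ m ∈ Finset.range (E+1),
        z m * (y * ∏ j, (X j fun w => Real.exp (v * a w)) ^ (B j k)) ^ m)
      (∑ m ∈ Finset.range (E+1),
        z m * ((m:ℝ) * (y * Q0) ^ (m-1) * (y * (Q0 * w)))) 0 := by
    refine HasDerivAt.fun_sum fun m _ => ?_
    have h2 := ((hQ.const_mul y).fun_pow m).const_mul (z m)
    rw [hQ0eval] at h2
    exact h2
  have hSS0 : (∑ m ∈ Finset.range (E+1),
      z m * (y * ∏ j, (X j fun w => Real.exp ((0:ℝ) * a w)) ^ (B j k)) ^ m) = S0 := by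
    rw [hQ0eval]
  have p3 : HasDerivAt (fun v => Real.log (∑ m ∈ Finset.range (E+1),
        z m * (y * ∏ j, (X j fun w => Real.exp (v * a w)) ^ (B j k)) ^ m))
      (u * w) 0 := by
    have h3 := hSS.log (by rw [hSS0]; exact hS0pos.ne')
    convert h3 using 1
    have hs1 : (∑ m ∈ Finset.range (E+1), z m * ((m:ℝ) * (y * Q0) ^ (m-1) * (y * (Q0 * w))))
        = (∑ m ∈ Finset.range (E+1), z m * ((m:ℝ) * (y*Q0)^(m-1) * (y*Q0))) * w := by
      rw [Finset.sum_mul]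
      exact Finset.sum_congr rfl fun m _ => by ring
    rw [hSS0, hs1, hu, div_mul_eq_mul_div]
  -- assemble
  have htot := ((p1.fun_add p2).fun_add p3).sub_const (Real.log c)
  have hfun : (fun v => Real.log ((X k fun w => Real.exp (v * a w))⁻¹)
        + Real.log ((∏ j, (X j fun w => Real.exp (v * a w)) ^ (max (-(B j k)) 0).toNat) ^ E)
        + Real.log (∑ m ∈ Finset.range (E+1),
            z m * (y * ∏ j, (X j fun w => Real.exp (v * a w)) ^ (B j k)) ^ m)
        - Real.log c)
      = fun v => Real.log (X' k fun w => Real.exp (v * a w)) := by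
    funext v
    rw [hXk]
    have hfj := hf v
    have hP : (0:ℝ) < ∏ j, (X j fun w => Real.exp (v * a w)) ^ (max (-(B j k)) 0).toNat :=
      Finset.prod_pos fun j _ => pow_pos (hfj j) _
    have hS : (0:ℝ) < ∑ m ∈ Finset.range (E+1),
        z m * (y * ∏ j, (X j fun w => Real.exp (v * a w)) ^ (B j k)) ^ m :=
      Finset.sum_pos (fun m _ => mul_pos (hz m) (pow_pos (mul_pos hy
        (Finset.prod_pos fun j _ => zpow_pos (hfj j) _)) m)) ⟨0, by simp⟩
    rw [Real.log_div (mul_pos (mul_pos (inv_pos.2 (hfj k)) (pow_pos hP E)) hS).ne' hc.ne',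
      Real.log_mul (mul_pos (inv_pos.2 (hfj k)) (pow_pos hP E)).ne' hS.ne',
      Real.log_mul (inv_ne_zero (hfj k).ne') (pow_pos hP E).ne']
  rw [hfun] at htot
  -- derivative value
  have hck1 : ((max (-(B k k)) 0 : ℤ) : ℝ) = 0 := by rw [hdiag k]; norm_num
  have hck2 : (B k k : ℝ) = 0 := by rw [hdiag k]; norm_num
  have hMk : (Mmat r k B u *ᵥ h) k
      = -(h k) + (E:ℝ) * ∑ j, (((max (-(B j k)) 0).toNat : ℕ) : ℝ) * h j + u * w := by
    simp only [Matrix.mulVec, dotProduct, Mmat, Matrix.of_apply, eq_self_iff_true, if_true]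
    have hsplit : ∀ j ∈ Finset.univ, (if j = k then (-1:ℝ)
          else (r k : ℝ) * ((max (-(B j k)) 0 : ℤ) : ℝ) + u * (B j k : ℝ)) * h j
        = (if j = k then -(h k) else 0)
          + ((E:ℝ) * ((((max (-(B j k)) 0).toNat : ℕ) : ℝ) * h j) + u * ((B j k : ℝ) * h j)) := by
      intro j _
      by_cases hji : j = k
      · rw [if_pos hji, if_pos hji, hji, hmaxcast k, hck1, hck2]
        ring
      · rw [if_neg hji, if_neg hji, hmaxcast j, hEcast]
        ring
    rw [Finset.sum_congr rfl hsplit, Finset.sum_add_distrib,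
      Finset.sum_ite_eq' Finset.univ k (fun _ => -(h k)),
      Finset.sum_add_distrib, ← Finset.mul_sum, ← Finset.mul_sum, ← hw]
    simp [add_assoc]
  rw [hMk]
  exact htot

end GCAHelper

/-- in an `(R,Z)`-cluster pattern, if the clusters of two seeds are
equal as ordered tuples (`x_{i;t} = x_{i;t_0}` for all `i`), then the exchange
matrices coincide: `B_t = B_{t_0}`. -/
theorem equal_clusters_equal_exchange_matrices (n m : ℕ) (r s : Fin n → ℤ)
    (hr : ∀ i, 0 < r i) (hs : ∀ i, 0 < s i)
    (X : Fin (m + 1) → Fin n → (Fin n → ℝ) → ℝ)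
    (B : Fin (m + 1) → Matrix (Fin n) (Fin n) ℤ)
    (hskew : ∀ t, (Matrix.diagonal s * Matrix.diagonal r * B t)ᵀ =
      -(Matrix.diagonal s * Matrix.diagonal r * B t))
    (hX0 : ∀ i, X 0 i = fun q => q i)
    (hmut : ∀ j : Fin m,
      IsGCAMutation r (X j.castSucc) (X j.succ) (B j.castSucc) (B j.succ))
    (heq : ∀ i, X (Fin.last m) i = X 0 i) :
    B (Fin.last m) = B 0 := by
  classical
  open GCAHelper in
  -- skew-symmetry consequences
  have hskewZ : ∀ t (i j : Fin n), s j * r j * B t j i = -(s i * r i * B t i j) := by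
    intro t i j
    have h1 := congrFun (congrFun (hskew t) i) j
    simpa [Matrix.transpose_apply, Matrix.diagonal_mul_diagonal, Matrix.diagonal_mul,
      mul_assoc] using h1
  have hskewR : ∀ t (i j : Fin n),
      (s j : ℝ) * (r j : ℝ) * (B t j i : ℝ) = -((s i : ℝ) * (r i : ℝ) * (B t i j : ℝ)) := by
    intro t i j
    exact_mod_cast congrArg (fun x : ℤ => (x : ℝ)) (hskewZ t i j)
  have hdiagz : ∀ t (i : Fin n), B t i i = 0 := by
    intro t i
    have h1 := hskewZ t i i
    have h2 : s i * r i * B t i i = 0 := by linarith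
    rcases mul_eq_zero.mp h2 with h | h
    · exact absurd h (mul_pos (hs i) (hr i)).ne'
    · exact h
  -- positivity of all cluster variables on the positive orthant
  have posAll : ∀ (t : ℕ) (ht : t < m + 1) (q : Fin n → ℝ), (∀ w, 0 < q w) →
      ∀ i, 0 < X ⟨t, ht⟩ i q := by
    intro t
    induction t with
    | zero =>
      intro ht q hq i
      rw [show (⟨0, ht⟩ : Fin (m+1)) = 0 from rfl, hX0]
      exact hq i
    | succ t ih =>
      intro ht q hq i
      have htm : t < m := by omega
      exact pos_step r _ _ _ _ (hmut ⟨t, htm⟩) q (fun i2 => ih (by omega) q hq i2) i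
  -- choose per-step data
  have hch : ∀ j : Fin m, ∃ (k : Fin n) (u : ℝ),
      B j.succ = genMut r k (B j.castSucc) ∧
      ∀ (a h : Fin n → ℝ),
        (∀ i, HasDerivAt (fun v => Real.log (X j.castSucc i fun w => Real.exp (v * a w))) (h i) 0) →
        ∀ i, HasDerivAt (fun v => Real.log (X j.succ i fun w => Real.exp (v * a w)))
          ((Mmat r k (B j.castSucc) u *ᵥ h) i) 0 := by
    intro j
    exact deriv_step r hr _ _ _ _ (hmut j)
      (fun q hq => posAll j.1 (by omega) q hq) (fun i => hdiagz j.castSucc i)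
  choose kk uu hgen hder using hch
  -- the combined induction
  have claim : ∀ (t : ℕ) (ht : t < m + 1), ∃ N : Matrix (Fin n) (Fin n) ℝ,
      (Om r s (B 0) = Nᵀ * Om r s (B ⟨t, ht⟩) * N) ∧
      ∀ a : Fin n → ℝ, ∀ i, HasDerivAt
        (fun v => Real.log (X ⟨t, ht⟩ i fun w => Real.exp (v * a w))) ((N *ᵥ a) i) 0 := by
    intro t
    induction t with
    | zero =>
      intro ht
      refine ⟨1, by simp, ?_⟩
      intro a i
      have h0 : (fun v => Real.log (X (⟨0, ht⟩ : Fin (m+1)) i fun w => Real.exp (v * a w)))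
          = fun v => v * a i := by
        rw [show (⟨0, ht⟩ : Fin (m+1)) = 0 from rfl, hX0 i]
        funext v
        rw [Real.log_exp]
      rw [h0, Matrix.one_mulVec]
      simpa using (hasDerivAt_id (0:ℝ)).mul_const (a i)
    | succ t ih =>
      intro ht
      have htm : t < m := by omega
      obtain ⟨N, hOm, hDer⟩ := ih (by omega)
      set j : Fin m := ⟨t, htm⟩ with hj
      set M : Matrix (Fin n) (Fin n) ℝ := Mmat r (kk j) (B j.castSucc) (uu j) with hM
      refine ⟨M * N, ?_, ?_⟩
      · have hMM : M * M = 1 := Mmat_sq _ _ _ _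
        have hstep : Om r s (B j.succ) = Mᵀ * Om r s (B j.castSucc) * M := by
          rw [hgen j]
          exact omega_step r s (fun i => by exact_mod_cast hr i)
            (fun i => by exact_mod_cast hs i) _ _ _ (hskewR j.castSucc)
        have hback : Om r s (B j.castSucc) = Mᵀ * Om r s (B j.succ) * M := by
          rw [hstep, Matrix.mul_assoc Mᵀ (Mᵀ * Om r s (B j.castSucc) * M) M,
            Matrix.mul_assoc (Mᵀ * Om r s (B j.castSucc)) M M, hMM, Matrix.mul_one,
            ← Matrix.mul_assoc Mᵀ Mᵀ (Om r s (B j.castSucc)), ← Matrix.transpose_mul, hMM,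
            Matrix.transpose_one, Matrix.one_mul]
        calc Om r s (B 0) = Nᵀ * Om r s (B j.castSucc) * N := hOm
          _ = Nᵀ * (Mᵀ * Om r s (B j.succ) * M) * N := by rw [hback]
          _ = (M * N)ᵀ * Om r s (B j.succ) * (M * N) := by
              rw [Matrix.transpose_mul]
              simp only [Matrix.mul_assoc]
      · intro a i
        have h1 := hder j a (N *ᵥ a) (hDer a) i
        rw [← Matrix.mulVec_mulVec]
        exact h1
  -- endgame
  obtain ⟨N, hOm, hDer⟩ := claim m (by omega)
  have hlast : (⟨m, by omega⟩ : Fin (m+1)) = Fin.last m := rfl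
  have hN : N = 1 := by
    ext i j
    set e : Fin n → ℝ := Pi.single j (1:ℝ) with he
    have h1 := hDer e i
    have h0 : (fun v => Real.log (X (⟨m, by omega⟩ : Fin (m+1)) i
          fun w => Real.exp (v * e w)))
        = fun v => v * e i := by
      rw [hlast, heq i, hX0 i]
      funext v
      rw [Real.log_exp]
    have h2 : HasDerivAt (fun v => Real.log (X (⟨m, by omega⟩ : Fin (m+1)) i
          fun w => Real.exp (v * e w))) (e i) 0 := by
      rw [h0]
      simpa using (hasDerivAt_id (0:ℝ)).mul_const (e i)
    have h3 := h1.unique h2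
    rw [he] at h3
    rw [Matrix.mulVec_single_one] at h3
    simp only [mul_one, Pi.single_apply] at h3
    rw [Matrix.one_apply]
    exact h3
  rw [hN] at hOm
  simp only [Matrix.transpose_one, Matrix.one_mul, Matrix.mul_one] at hOm
  ext i j
  have h4 := congrFun (congrFun hOm i) j
  simp only [Om, Matrix.of_apply] at h4
  have hne : ((r j : ℝ) * (s j : ℝ)) ≠ 0 :=
    mul_ne_zero (by exact_mod_cast (hr j).ne') (by exact_mod_cast (hs j).ne')
  rw [hlast] at h4
  have hrj : ((r j : ℤ) : ℝ) ≠ 0 := by exact_mod_cast (hr j).ne'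
  have hsj : ((s j : ℤ) : ℝ) ≠ 0 := by exact_mod_cast (hs j).ne'
  field_simp at h4
  exact_mod_cast h4.symm
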